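/- Let U ⊆ ℝ⁵ be open, let θ¹ and θ² be smooth ℂ-valued 1-forms on U, and let ψ be a smooth ℝ-valued 1-form on U, such that at every point x ∈ U the five complex covectors θ¹_x, θ²_x, conj(θ¹_x), conj(θ²_x), ψ_x are linearly independent over ℂ in Hom_ℝ(ℝ⁵, ℂ). Suppose there are smooth functions T₁, T₂ : U → ℂ with dθ¹ = −i·ψ∧θ¹ + conj(θ¹)∧θ² and dθ² = −2i·ψ∧θ² + T₁·θ¹∧conj(θ¹) + T₂·θ¹∧θ². Then there exists a smooth function T₃ : U → ℂ with Re T₃ = 0 (purely imaginary) such that dψ = i·θ²∧conj(θ²) + i·conj(T₂)·θ¹∧conj(θ²) − i·T₂·conj(θ¹)∧θ² + T₃·θ¹∧conj(θ¹). -/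

import Mathlib

/-- Pointwise complex conjugate of a ℂ-valued real-linear covector. -/
noncomputable def conjForm {E : Type*} [NormedAddCommGroup E] [NormedSpace ℝ E]
    (α : E →L[ℝ] ℂ) : E →L[ℝ] ℂ :=
  Complex.conjCLE.toContinuousLinearMap.comp α

/-- A real covector regarded as a ℂ-valued covector. -/
noncomputable def realToC {E : Type*} [NormedAddCommGroup E] [NormedSpace ℝ E]
    (φ : E →L[ℝ] ℝ) : E →L[ℝ] ℂ :=
  Complex.ofRealCLM.comp φ

/-- Exterior derivative of a ℂ-valued 1-form (alternatized Fréchet derivative). -/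
noncomputable def extD {E : Type*} [NormedAddCommGroup E] [NormedSpace ℝ E]
    (α : E → E →L[ℝ] ℂ) (x v w : E) : ℂ :=
  fderiv ℝ (fun y => α y w) x v - fderiv ℝ (fun y => α y v) x w

/-- Exterior derivative of an ℝ-valued 1-form. -/
noncomputable def extDR {E : Type*} [NormedAddCommGroup E] [NormedSpace ℝ E]
    (α : E → E →L[ℝ] ℝ) (x v w : E) : ℝ :=
  fderiv ℝ (fun y => α y w) x v - fderiv ℝ (fun y => α y v) x w

open Complex

/-- Step A algebra: from d²θ¹ = 0 (hE) and the structure equations, derive (dψ−γ₀)∧θ¹ = 0. -/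
lemma algA {α : Type*} (t1 t2 c1 c2 ps : α → ℂ) (P1 Q1 P2 Pψ D : α → α → ℂ)
    (T1 T2 T2b : ℂ)
    (hD : ∀ a b, Pψ a b - Pψ b a = D a b)
    (hF1 : ∀ a b, P1 a b - P1 b a =
      -I * (ps a * t1 b - ps b * t1 a) + (c1 a * t2 b - c1 b * t2 a))
    (hQ1 : ∀ a b, Q1 a b - Q1 b a =
      I * (ps a * c1 b - ps b * c1 a) + (t1 a * c2 b - t1 b * c2 a))
    (hF2 : ∀ a b, P2 a b - P2 b a =
      -2 * I * (ps a * t2 b - ps b * t2 a) + T1 * (t1 a * c1 b - t1 b * c1 a)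
        + T2 * (t1 a * t2 b - t1 b * t2 a))
    (hE : ∀ u v w,
      (-I * (Pψ u v * t1 w + ps v * P1 u w - Pψ u w * t1 v - ps w * P1 u v)
        + (Q1 u v * t2 w + c1 v * P2 u w - Q1 u w * t2 v - c1 w * P2 u v))
      + (-I * (Pψ v w * t1 u + ps w * P1 v u - Pψ v u * t1 w - ps u * P1 v w)
        + (Q1 v w * t2 u + c1 w * P2 v u - Q1 v u * t2 w - c1 u * P2 v w))
      + (-I * (Pψ w u * t1 v + ps u * P1 w v - Pψ w v * t1 u - ps v * P1 w u)
        + (Q1 w u * t2 v + c1 u * P2 w v - Q1 w v * t2 u - c1 v * P2 w u)) = 0) :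
    ∀ u v w,
      (D v w - I * (t2 v * c2 w - t2 w * c2 v) - I * T2b * (t1 v * c2 w - t1 w * c2 v)
        + I * T2 * (c1 v * t2 w - c1 w * t2 v)) * t1 u
      + (D w u - I * (t2 w * c2 u - t2 u * c2 w) - I * T2b * (t1 w * c2 u - t1 u * c2 w)
        + I * T2 * (c1 w * t2 u - c1 u * t2 w)) * t1 v
      + (D u v - I * (t2 u * c2 v - t2 v * c2 u) - I * T2b * (t1 u * c2 v - t1 v * c2 u)
        + I * T2 * (c1 u * t2 v - c1 v * t2 u)) * t1 w = 0 := by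
  intro u v w
  have hI : I * I = -1 := I_mul_I
  linear_combination I * hE u v w
    - t1 u * hD v w - t1 v * hD w u - t1 w * hD u v
    + ps u * hF1 v w + ps v * hF1 w u + ps w * hF1 u v
    - I * t2 u * hQ1 v w - I * t2 v * hQ1 w u - I * t2 w * hQ1 u v
    + I * c1 u * hF2 v w + I * c1 v * hF2 w u + I * c1 w * hF2 u v
    + (- t2 v * c1 w * ps u + t2 v * c1 u * ps w + t2 w * c1 v * ps u - t2 w * c1 u * ps v + t1 v * Pψ w u - t1 v * Pψ u w + t1 w * Pψ u v - t1 w * Pψ v u - c1 v * t2 u * ps w + c1 w * t2 u * ps v + t1 u * Pψ v w - t1 u * Pψ w v - ps u * P1 v w + ps u * P1 w v + ps v * P1 u w - ps v * P1 w u - ps w * P1 u v + ps w * P1 v u) * Complex.I_sq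
open Complex

/-- Complexification of the wedge identity `γ∧α = 0`. Pairs `(a,b) : α × α` represent `a + ib`. -/
lemma algExt {α : Type*} (t1 : α → ℂ) (γ : α → α → ℂ)
    (h : ∀ u v w, γ v w * t1 u + γ w u * t1 v + γ u v * t1 w = 0) :
    ∀ p q r : α × α,
      (γ q.1 r.1 - γ q.2 r.2 + I * γ q.1 r.2 + I * γ q.2 r.1) * (t1 p.1 + I * t1 p.2)
      + (γ r.1 p.1 - γ r.2 p.2 + I * γ r.1 p.2 + I * γ r.2 p.1) * (t1 q.1 + I * t1 q.2)
      + (γ p.1 q.1 - γ p.2 q.2 + I * γ p.1 q.2 + I * γ p.2 q.1) * (t1 r.1 + I * t1 r.2)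
      = 0 := by
  intro p q r
  have e111 := h p.1 q.1 r.1
  have e211 := h p.2 q.1 r.1
  have e121 := h p.1 q.2 r.1
  have e112 := h p.1 q.1 r.2
  have e221 := h p.2 q.2 r.1
  have e212 := h p.2 q.1 r.2
  have e122 := h p.1 q.2 r.2
  have e222 := h p.2 q.2 r.2
  linear_combination e111 + I * e211 + I * e121 + I * e112
    + I^2 * e221 + I^2 * e212 + I^2 * e122 + I^3 * e222
    - ((γ q.2 r.2 * t1 p.1 + γ r.2 p.2 * t1 q.1 + γ p.2 q.2 * t1 r.1)
       + I * (γ q.2 r.2 * t1 p.2 + γ r.2 p.2 * t1 q.2 + γ p.2 q.2 * t1 r.2)) * Complex.I_sq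

lemma algCartan {β : Type*} (t1 c1 : β → ℂ) (γ : β → β → ℂ) (p1 p3 : β)
    (anti : ∀ a b, γ a b = -γ b a)
    (h1 : t1 p1 = 1) (h2 : c1 p1 = 0) (h3 : t1 p3 = 0) (h4 : c1 p3 = 1)
    (hA : ∀ p q r, γ q r * t1 p + γ r p * t1 q + γ p q * t1 r = 0)
    (hB : ∀ p q r, γ q r * c1 p + γ r p * c1 q + γ p q * c1 r = 0) :
    ∀ q r, γ q r = γ p1 p3 * (t1 q * c1 r - t1 r * c1 q) := by
  have e1 : ∀ q r, γ q r = t1 q * γ p1 r - t1 r * γ p1 q := by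
    intro q r
    have h := hA p1 q r
    rw [h1, anti r p1] at h
    linear_combination h
  have e2 : ∀ q r, γ q r = c1 q * γ p3 r - c1 r * γ p3 q := by
    intro q r
    have h := hB p3 q r
    rw [h4, anti r p3] at h
    linear_combination h
  have e3 : ∀ r, γ p1 r = c1 r * γ p1 p3 := by
    intro r
    have h := e2 p1 r
    rw [h2, anti p3 p1] at h
    linear_combination h
  intro q r
  rw [e1 q r, e3 q, e3 r]
  ring
open Complex

abbrev V5 := Fin 5 → ℝ

lemma hasFDeriv_applyF {F : Type*} [NormedAddCommGroup F] [NormedSpace ℝ F]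
    {c : V5 → V5 →L[ℝ] F} {c' : V5 →L[ℝ] (V5 →L[ℝ] F)} {x : V5} (w : V5)
    (hc : HasFDerivAt c c' x) :
    HasFDerivAt (fun y => c y w) (c'.flip w) x := by
  simpa using hc.clm_apply (hasFDerivAt_const w x)

section Analysis
variable {θ1 θ2 : V5 → V5 →L[ℝ] ℂ} {ψ : V5 → V5 →L[ℝ] ℝ} {U : Set V5}

lemma extD_eq (hU : IsOpen U) (hθ1 : ContDiffOn ℝ (⊤ : ℕ∞) θ1 U) {x : V5} (hx : x ∈ U) :
    ∀ a b, extD θ1 x a b = fderiv ℝ θ1 x a b - fderiv ℝ θ1 x b a := by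
  intro a b
  have hd : HasFDerivAt θ1 (fderiv ℝ θ1 x) x :=
    ((hθ1.differentiableOn (by simp) x hx).differentiableAt (hU.mem_nhds hx)).hasFDerivAt
  have h1 : fderiv ℝ (fun z => θ1 z b) x = (fderiv ℝ θ1 x).flip b :=
    (hasFDeriv_applyF b hd).fderiv
  have h2 : fderiv ℝ (fun z => θ1 z a) x = (fderiv ℝ θ1 x).flip a :=
    (hasFDeriv_applyF a hd).fderiv
  simp [extD, h1, h2]

lemma extDR_eq (hU : IsOpen U) (hψ : ContDiffOn ℝ (⊤ : ℕ∞) ψ U) {x : V5} (hx : x ∈ U) :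
    ∀ a b, extDR ψ x a b = fderiv ℝ ψ x a b - fderiv ℝ ψ x b a := by
  intro a b
  have hd : HasFDerivAt ψ (fderiv ℝ ψ x) x :=
    ((hψ.differentiableOn (by simp) x hx).differentiableAt (hU.mem_nhds hx)).hasFDerivAt
  have h1 : fderiv ℝ (fun z => ψ z b) x = (fderiv ℝ ψ x).flip b :=
    (hasFDeriv_applyF b hd).fderiv
  have h2 : fderiv ℝ (fun z => ψ z a) x = (fderiv ℝ ψ x).flip a :=
    (hasFDeriv_applyF a hd).fderiv
  simp [extDR, h1, h2]

end Analysis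

section Key
variable {θ1 θ2 : V5 → V5 →L[ℝ] ℂ} {ψ : V5 → V5 →L[ℝ] ℝ} {U : Set V5}

lemma keyEE (hU : IsOpen U) (hθ1 : ContDiffOn ℝ (⊤ : ℕ∞) θ1 U)
    (hθ2 : ContDiffOn ℝ (⊤ : ℕ∞) θ2 U) (hψ : ContDiffOn ℝ (⊤ : ℕ∞) ψ U)
    (T1 T2 : V5 → ℂ)
    (heq1 : ∀ x ∈ U, ∀ v w, extD θ1 x v w =
      -Complex.I * (((ψ x v : ℝ) : ℂ) * θ1 x w - ((ψ x w : ℝ) : ℂ) * θ1 x v)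
      + ((starRingEnd ℂ) (θ1 x v) * θ2 x w - (starRingEnd ℂ) (θ1 x w) * θ2 x v))
    {x : V5} (hx : x ∈ U) :
    ∀ u v w : V5,
      (-Complex.I * (((fderiv ℝ ψ x u v : ℝ) : ℂ) * θ1 x w
          + ((ψ x v : ℝ) : ℂ) * fderiv ℝ θ1 x u w
          - ((fderiv ℝ ψ x u w : ℝ) : ℂ) * θ1 x v
          - ((ψ x w : ℝ) : ℂ) * fderiv ℝ θ1 x u v)
        + ((starRingEnd ℂ) (fderiv ℝ θ1 x u v) * θ2 x w
          + (starRingEnd ℂ) (θ1 x v) * fderiv ℝ θ2 x u w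
          - (starRingEnd ℂ) (fderiv ℝ θ1 x u w) * θ2 x v
          - (starRingEnd ℂ) (θ1 x w) * fderiv ℝ θ2 x u v))
      + (-Complex.I * (((fderiv ℝ ψ x v w : ℝ) : ℂ) * θ1 x u
          + ((ψ x w : ℝ) : ℂ) * fderiv ℝ θ1 x v u
          - ((fderiv ℝ ψ x v u : ℝ) : ℂ) * θ1 x w
          - ((ψ x u : ℝ) : ℂ) * fderiv ℝ θ1 x v w)
        + ((starRingEnd ℂ) (fderiv ℝ θ1 x v w) * θ2 x u
          + (starRingEnd ℂ) (θ1 x w) * fderiv ℝ θ2 x v u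
          - (starRingEnd ℂ) (fderiv ℝ θ1 x v u) * θ2 x w
          - (starRingEnd ℂ) (θ1 x u) * fderiv ℝ θ2 x v w))
      + (-Complex.I * (((fderiv ℝ ψ x w u : ℝ) : ℂ) * θ1 x v
          + ((ψ x u : ℝ) : ℂ) * fderiv ℝ θ1 x w v
          - ((fderiv ℝ ψ x w v : ℝ) : ℂ) * θ1 x u
          - ((ψ x v : ℝ) : ℂ) * fderiv ℝ θ1 x w u)
        + ((starRingEnd ℂ) (fderiv ℝ θ1 x w u) * θ2 x v
          + (starRingEnd ℂ) (θ1 x u) * fderiv ℝ θ2 x w v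
          - (starRingEnd ℂ) (fderiv ℝ θ1 x w v) * θ2 x u
          - (starRingEnd ℂ) (θ1 x v) * fderiv ℝ θ2 x w u)) = 0 := by
  have hUx : U ∈ nhds x := hU.mem_nhds hx
  have hd1y : ∀ y ∈ U, HasFDerivAt θ1 (fderiv ℝ θ1 y) y := fun y hy =>
    ((hθ1.differentiableOn (by simp) y hy).differentiableAt
      (hU.mem_nhds hy)).hasFDerivAt
  have hd2x : HasFDerivAt θ2 (fderiv ℝ θ2 x) x :=
    ((hθ2.differentiableOn (by simp) x hx).differentiableAt hUx).hasFDerivAt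
  have hdψx : HasFDerivAt ψ (fderiv ℝ ψ x) x :=
    ((hψ.differentiableOn (by simp) x hx).differentiableAt hUx).hasFDerivAt
  have hc1' : ContDiffOn ℝ (⊤ : ℕ∞) (fun y => fderiv ℝ θ1 y) U :=
    hθ1.fderiv_of_isOpen hU (by simp)
  have hdd1 : HasFDerivAt (fun y => fderiv ℝ θ1 y) (fderiv ℝ (fun y => fderiv ℝ θ1 y) x) x :=
    ((hc1'.differentiableOn (by simp) x hx).differentiableAt hUx).hasFDerivAt
  set dd1 := fderiv ℝ (fun y => fderiv ℝ θ1 y) x with hdd1def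
  have hsym : ∀ u v : V5, dd1 u v = dd1 v u := fun u v =>
    second_derivative_symmetric_of_eventually
      (Filter.eventually_of_mem hUx hd1y) hdd1 u v
  -- derivative of both sides of heq1
  have hpsv : ∀ v, HasFDerivAt (fun y => ((ψ y v : ℝ) : ℂ))
      (Complex.ofRealCLM.comp ((fderiv ℝ ψ x).flip v)) x := fun v =>
    Complex.ofRealCLM.hasFDerivAt.comp x (hasFDeriv_applyF v hdψx)
  have ht1v : ∀ v, HasFDerivAt (fun y => θ1 y v) ((fderiv ℝ θ1 x).flip v) x := fun v =>
    hasFDeriv_applyF v (hd1y x hx)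
  have ht2v : ∀ v, HasFDerivAt (fun y => θ2 y v) ((fderiv ℝ θ2 x).flip v) x := fun v =>
    hasFDeriv_applyF v hd2x
  have hc1v : ∀ v, HasFDerivAt (fun y => (starRingEnd ℂ) (θ1 y v))
      (Complex.conjCLE.toContinuousLinearMap.comp ((fderiv ℝ θ1 x).flip v)) x := fun v =>
    Complex.conjCLE.toContinuousLinearMap.hasFDerivAt.comp x (ht1v v)
  have EE : ∀ v w u : V5, dd1 u v w - dd1 u w v =
      -Complex.I * (((fderiv ℝ ψ x u v : ℝ) : ℂ) * θ1 x w
          + ((ψ x v : ℝ) : ℂ) * fderiv ℝ θ1 x u w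
          - ((fderiv ℝ ψ x u w : ℝ) : ℂ) * θ1 x v
          - ((ψ x w : ℝ) : ℂ) * fderiv ℝ θ1 x u v)
        + ((starRingEnd ℂ) (fderiv ℝ θ1 x u v) * θ2 x w
          + (starRingEnd ℂ) (θ1 x v) * fderiv ℝ θ2 x u w
          - (starRingEnd ℂ) (fderiv ℝ θ1 x u w) * θ2 x v
          - (starRingEnd ℂ) (θ1 x w) * fderiv ℝ θ2 x u v) := by
    intro v w u
    have hfun : (fun y => fderiv ℝ θ1 y v w - fderiv ℝ θ1 y w v) =ᶠ[nhds x]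
        (fun y => -Complex.I * (((ψ y v : ℝ) : ℂ) * θ1 y w - ((ψ y w : ℝ) : ℂ) * θ1 y v)
          + ((starRingEnd ℂ) (θ1 y v) * θ2 y w - (starRingEnd ℂ) (θ1 y w) * θ2 y v)) := by
      filter_upwards [hUx] with y hy
      have h1 : fderiv ℝ (fun z => θ1 z w) y = (fderiv ℝ θ1 y).flip w :=
        (hasFDeriv_applyF w (hd1y y hy)).fderiv
      have h2 : fderiv ℝ (fun z => θ1 z v) y = (fderiv ℝ θ1 y).flip v :=
        (hasFDeriv_applyF v (hd1y y hy)).fderiv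
      have := heq1 y hy v w
      rw [extD, h1, h2] at this
      simpa using this
    have hG : HasFDerivAt (fun y => fderiv ℝ θ1 y v w - fderiv ℝ θ1 y w v)
        (((dd1.flip v).flip w) - ((dd1.flip w).flip v)) x :=
      (hasFDeriv_applyF w (hasFDeriv_applyF v hdd1)).sub
        (hasFDeriv_applyF v (hasFDeriv_applyF w hdd1))
    have hR := ((((hpsv v).mul (ht1v w)).sub ((hpsv w).mul (ht1v v))).const_mul
        (-Complex.I)).add (((hc1v v).mul (ht2v w)).sub ((hc1v w).mul (ht2v v)))
    have hG2 := hR.congr_of_eventuallyEq hfun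
    have h3 := hG.unique hG2
    have h4 := congrArg (fun (L : V5 →L[ℝ] ℂ) => L u) h3
    simp only [ContinuousLinearMap.sub_apply, ContinuousLinearMap.add_apply,
      ContinuousLinearMap.smul_apply, ContinuousLinearMap.flip_apply,
      ContinuousLinearMap.coe_comp', Function.comp_apply, smul_eq_mul,
      Complex.ofRealCLM_apply, ContinuousLinearEquiv.coe_coe, Complex.conjCLE_apply] at h4
    rw [h4]
    ring
  intro u v w
  rw [← EE v w u, ← EE w u v, ← EE u v w]
  rw [hsym u v, hsym v w, hsym u w]
  ring

end Key

/-- The 2-form `γ = dψ − iθ²∧θ̄² − iT̄₂θ¹∧θ̄² + iT₂θ̄¹∧θ²`. -/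
noncomputable def gamF (θ1 θ2 : V5 → V5 →L[ℝ] ℂ) (ψ : V5 → V5 →L[ℝ] ℝ) (T2 : V5 → ℂ)
    (x a b : V5) : ℂ :=
  ((extDR ψ x a b : ℝ) : ℂ)
    - Complex.I * (θ2 x a * (starRingEnd ℂ) (θ2 x b) - θ2 x b * (starRingEnd ℂ) (θ2 x a))
    - Complex.I * (starRingEnd ℂ) (T2 x) *
        (θ1 x a * (starRingEnd ℂ) (θ2 x b) - θ1 x b * (starRingEnd ℂ) (θ2 x a))
    + Complex.I * T2 x *
        ((starRingEnd ℂ) (θ1 x a) * θ2 x b - (starRingEnd ℂ) (θ1 x b) * θ2 x a)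

section Key2
variable {θ1 θ2 : V5 → V5 →L[ℝ] ℂ} {ψ : V5 → V5 →L[ℝ] ℝ} {U : Set V5}

lemma keyA (hU : IsOpen U) (hθ1 : ContDiffOn ℝ (⊤ : ℕ∞) θ1 U)
    (hθ2 : ContDiffOn ℝ (⊤ : ℕ∞) θ2 U) (hψ : ContDiffOn ℝ (⊤ : ℕ∞) ψ U)
    (T1 T2 : V5 → ℂ)
    (heq1 : ∀ x ∈ U, ∀ v w, extD θ1 x v w =
      -Complex.I * (((ψ x v : ℝ) : ℂ) * θ1 x w - ((ψ x w : ℝ) : ℂ) * θ1 x v)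
      + ((starRingEnd ℂ) (θ1 x v) * θ2 x w - (starRingEnd ℂ) (θ1 x w) * θ2 x v))
    (heq2 : ∀ x ∈ U, ∀ v w, extD θ2 x v w =
      -2 * Complex.I * (((ψ x v : ℝ) : ℂ) * θ2 x w - ((ψ x w : ℝ) : ℂ) * θ2 x v)
      + T1 x * (θ1 x v * (starRingEnd ℂ) (θ1 x w) - θ1 x w * (starRingEnd ℂ) (θ1 x v))
      + T2 x * (θ1 x v * θ2 x w - θ1 x w * θ2 x v))
    {x : V5} (hx : x ∈ U) :
    ∀ u v w : V5,
      gamF θ1 θ2 ψ T2 x v w * θ1 x u + gamF θ1 θ2 ψ T2 x w u * θ1 x v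
        + gamF θ1 θ2 ψ T2 x u v * θ1 x w = 0 := by
  have hF1 : ∀ a b, fderiv ℝ θ1 x a b - fderiv ℝ θ1 x b a =
      -Complex.I * (((ψ x a : ℝ) : ℂ) * θ1 x b - ((ψ x b : ℝ) : ℂ) * θ1 x a)
      + ((starRingEnd ℂ) (θ1 x a) * θ2 x b - (starRingEnd ℂ) (θ1 x b) * θ2 x a) := by
    intro a b
    rw [← extD_eq hU hθ1 hx a b]
    exact heq1 x hx a b
  have hF2 : ∀ a b, fderiv ℝ θ2 x a b - fderiv ℝ θ2 x b a =
      -2 * Complex.I * (((ψ x a : ℝ) : ℂ) * θ2 x b - ((ψ x b : ℝ) : ℂ) * θ2 x a)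
      + T1 x * (θ1 x a * (starRingEnd ℂ) (θ1 x b) - θ1 x b * (starRingEnd ℂ) (θ1 x a))
      + T2 x * (θ1 x a * θ2 x b - θ1 x b * θ2 x a) := by
    intro a b
    rw [← extD_eq hU hθ2 hx a b]
    exact heq2 x hx a b
  have hQ1 : ∀ a b, (starRingEnd ℂ) (fderiv ℝ θ1 x a b)
      - (starRingEnd ℂ) (fderiv ℝ θ1 x b a) =
      Complex.I * (((ψ x a : ℝ) : ℂ) * (starRingEnd ℂ) (θ1 x b)
        - ((ψ x b : ℝ) : ℂ) * (starRingEnd ℂ) (θ1 x a))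
      + (θ1 x a * (starRingEnd ℂ) (θ2 x b) - θ1 x b * (starRingEnd ℂ) (θ2 x a)) := by
    intro a b
    have h := congrArg (starRingEnd ℂ) (hF1 a b)
    simp only [map_sub, map_add, map_mul, map_neg, Complex.conj_I, Complex.conj_conj,
      Complex.conj_ofReal] at h
    linear_combination h
  have hD : ∀ a b, ((fderiv ℝ ψ x a b : ℝ) : ℂ) - ((fderiv ℝ ψ x b a : ℝ) : ℂ) =
      ((extDR ψ x a b : ℝ) : ℂ) := by
    intro a b
    rw [extDR_eq hU hψ hx a b]
    push_cast
    ring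
  have hE := keyEE hU hθ1 hθ2 hψ T1 T2 heq1 hx
  have := algA (fun a => θ1 x a) (fun a => θ2 x a)
    (fun a => (starRingEnd ℂ) (θ1 x a)) (fun a => (starRingEnd ℂ) (θ2 x a))
    (fun a => ((ψ x a : ℝ) : ℂ))
    (fun a b => fderiv ℝ θ1 x a b) (fun a b => (starRingEnd ℂ) (fderiv ℝ θ1 x a b))
    (fun a b => fderiv ℝ θ2 x a b) (fun a b => ((fderiv ℝ ψ x a b : ℝ) : ℂ))
    (fun a b => ((extDR ψ x a b : ℝ) : ℂ))
    (T1 x) (T2 x) ((starRingEnd ℂ) (T2 x)) hD hF1 hQ1 hF2 hE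
  intro u v w
  have h := this u v w
  simp only [gamF]
  linear_combination h
end Key2

/-- ℂ-linear extension of a real-linear covector `(Fin 5 → ℝ) →L[ℝ] ℂ` to `Fin 5 → ℂ`. -/
noncomputable def ExtL : ((Fin 5 → ℝ) →L[ℝ] ℂ) →ₗ[ℂ] Module.Dual ℂ (Fin 5 → ℂ) where
  toFun α :=
    { toFun := fun z => α (fun k => (z k).re) + Complex.I * α (fun k => (z k).im)
      map_add' := by
        intro z z'
        have hre : (fun k => ((z + z') k).re) = (fun k => (z k).re) + fun k => (z' k).re := by
          funext k; simp
        have him : (fun k => ((z + z') k).im) = (fun k => (z k).im) + fun k => (z' k).im := by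
          funext k; simp
        rw [hre, him, map_add, map_add]; ring
      map_smul' := by
        intro c z
        have hre : (fun k => ((c • z) k).re)
            = c.re • (fun k => (z k).re) - c.im • (fun k => (z k).im) := by
          funext k; simp [Complex.mul_re, mul_comm]
        have him : (fun k => ((c • z) k).im)
            = c.re • (fun k => (z k).im) + c.im • (fun k => (z k).re) := by
          funext k; simp [Complex.mul_im, mul_comm]
        rw [hre, him, map_sub, map_add, map_smul, map_smul, map_smul, map_smul]
        simp only [RingHom.id_apply, real_smul, smul_eq_mul]
        linear_combination ((α fun k => (z k).re) + I * (α fun k => (z k).im))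
            * (Complex.re_add_im c)
          - (c.im : ℂ) * (α fun k => (z k).im) * Complex.I_sq }
  map_add' α β := by
    refine LinearMap.ext fun z => ?_
    simp only [ContinuousLinearMap.add_apply, LinearMap.coe_mk, AddHom.coe_mk,
      LinearMap.add_apply]
    ring
  map_smul' c α := by
    refine LinearMap.ext fun z => ?_
    simp only [ContinuousLinearMap.coe_smul', Pi.smul_apply, LinearMap.coe_mk, AddHom.coe_mk,
      RingHom.id_apply, LinearMap.smul_apply, smul_eq_mul]
    ring

lemma ExtL_apply (α : (Fin 5 → ℝ) →L[ℝ] ℂ) (z : Fin 5 → ℂ) :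
    ExtL α z = α (fun k => (z k).re) + Complex.I * α (fun k => (z k).im) := rfl

lemma ExtL_injective : Function.Injective ExtL := by
  intro α β h
  ext v
  have := congrArg (fun (φ : Module.Dual ℂ (Fin 5 → ℂ)) => φ (fun k => ((v k : ℝ) : ℂ))) h
  have hz : (fun _ : Fin 5 => (0:ℝ)) = (0 : Fin 5 → ℝ) := rfl
  simpa [ExtL_apply, hz] using this

/-- Predual vectors for an independent family of five covectors. -/
lemma exists_dual (fam : Fin 5 → ((Fin 5 → ℝ) →L[ℝ] ℂ)) (h : LinearIndependent ℂ fam) :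
    ∃ f : Fin 5 → (Fin 5 → ℂ), ∀ i j, ExtL (fam i) (f j) = if i = j then 1 else 0 := by
  have hmap : LinearIndependent ℂ (fun i => ExtL (fam i)) := h.map' ExtL
    (LinearMap.ker_eq_bot.mpr ExtL_injective)
  have hfr : Module.finrank ℂ (Module.Dual ℂ (Fin 5 → ℂ)) = 5 := by
    simp [Module.finrank_eq_card_basis (Pi.basisFun ℂ (Fin 5)).dualBasis]
  have hcard : Fintype.card (Fin 5)
      = Module.finrank ℂ (Module.Dual ℂ (Fin 5 → ℂ)) := by simp [hfr]
  let C : Module.Basis (Fin 5) ℂ (Module.Dual ℂ (Fin 5 → ℂ)) :=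
    basisOfLinearIndependentOfCardEqFinrank hmap hcard
  have hC : ∀ i, C i = ExtL (fam i) := fun i => by
    simp [C, coe_basisOfLinearIndependentOfCardEqFinrank]
  refine ⟨fun j => (Module.evalEquiv ℂ (Fin 5 → ℂ)).symm (C.dualBasis j), fun i j => ?_⟩
  rw [← hC]
  rw [Module.apply_evalEquiv_symm_apply, Module.Basis.dualBasis_apply_self]

section PW
variable {θ1 θ2 : V5 → V5 →L[ℝ] ℂ} {ψ : V5 → V5 →L[ℝ] ℝ} {U : Set V5}

lemma conjForm_apply' (α : V5 →L[ℝ] ℂ) (v : V5) :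
    conjForm α v = (starRingEnd ℂ) (α v) := rfl

lemma mainPointwise (hU : IsOpen U) (hθ1 : ContDiffOn ℝ (⊤ : ℕ∞) θ1 U)
    (hθ2 : ContDiffOn ℝ (⊤ : ℕ∞) θ2 U) (hψ : ContDiffOn ℝ (⊤ : ℕ∞) ψ U)
    (hindep : ∀ x ∈ U, LinearIndependent ℂ
      ![θ1 x, θ2 x, conjForm (θ1 x), conjForm (θ2 x), realToC (ψ x)])
    (T1 T2 : V5 → ℂ)
    (heq1 : ∀ x ∈ U, ∀ v w, extD θ1 x v w =
      -Complex.I * (((ψ x v : ℝ) : ℂ) * θ1 x w - ((ψ x w : ℝ) : ℂ) * θ1 x v)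
      + ((starRingEnd ℂ) (θ1 x v) * θ2 x w - (starRingEnd ℂ) (θ1 x w) * θ2 x v))
    (heq2 : ∀ x ∈ U, ∀ v w, extD θ2 x v w =
      -2 * Complex.I * (((ψ x v : ℝ) : ℂ) * θ2 x w - ((ψ x w : ℝ) : ℂ) * θ2 x v)
      + T1 x * (θ1 x v * (starRingEnd ℂ) (θ1 x w) - θ1 x w * (starRingEnd ℂ) (θ1 x v))
      + T2 x * (θ1 x v * θ2 x w - θ1 x w * θ2 x v))
    {x : V5} (hx : x ∈ U) :
    (∃ v w : V5, θ1 x v * (starRingEnd ℂ) (θ1 x w)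
        - θ1 x w * (starRingEnd ℂ) (θ1 x v) ≠ 0) ∧
    ∃ c : ℂ, c.re = 0 ∧ ∀ v w : V5, gamF θ1 θ2 ψ T2 x v w =
      c * (θ1 x v * (starRingEnd ℂ) (θ1 x w) - θ1 x w * (starRingEnd ℂ) (θ1 x v)) := by
  have hA := keyA hU hθ1 hθ2 hψ T1 T2 heq1 heq2 hx
  have hreal : ∀ a b, (starRingEnd ℂ) (gamF θ1 θ2 ψ T2 x a b) = gamF θ1 θ2 ψ T2 x a b := by
    intro a b
    simp only [gamF, map_sub, map_add, map_mul, Complex.conj_I, Complex.conj_conj,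
      Complex.conj_ofReal]
    ring
  have hB : ∀ u v w : V5,
      gamF θ1 θ2 ψ T2 x v w * (starRingEnd ℂ) (θ1 x u)
      + gamF θ1 θ2 ψ T2 x w u * (starRingEnd ℂ) (θ1 x v)
      + gamF θ1 θ2 ψ T2 x u v * (starRingEnd ℂ) (θ1 x w) = 0 := by
    intro u v w
    have h := congrArg (starRingEnd ℂ) (hA u v w)
    simp only [map_add, map_mul, map_zero] at h
    rw [hreal v w, hreal w u, hreal u v] at h
    exact h
  have anti : ∀ a b, gamF θ1 θ2 ψ T2 x a b = -gamF θ1 θ2 ψ T2 x b a := by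
    intro a b
    simp only [gamF, extDR]
    push_cast
    ring
  -- dual vectors
  obtain ⟨f, hf⟩ := exists_dual _ (hindep x hx)
  set p1 : V5 × V5 := (fun k => (f 0 k).re, fun k => (f 0 k).im) with hp1
  set p3 : V5 × V5 := (fun k => (f 2 k).re, fun k => (f 2 k).im) with hp3
  have h00 : θ1 x p1.1 + Complex.I * θ1 x p1.2 = 1 := by
    have := hf 0 0
    simp only [Matrix.cons_val_zero] at this
    rw [ExtL_apply] at this
    simpa using this
  have h20 : (starRingEnd ℂ) (θ1 x p1.1) + Complex.I * (starRingEnd ℂ) (θ1 x p1.2) = 0 := by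
    have := hf 2 0
    simp only [Matrix.cons_val_two, Matrix.tail_cons, Matrix.head_cons] at this
    rw [ExtL_apply] at this
    simp only [conjForm_apply'] at this
    simpa using this
  have h02 : θ1 x p3.1 + Complex.I * θ1 x p3.2 = 0 := by
    have := hf 0 2
    simp only [Matrix.cons_val_zero] at this
    rw [ExtL_apply] at this
    simpa using this
  have h22 : (starRingEnd ℂ) (θ1 x p3.1) + Complex.I * (starRingEnd ℂ) (θ1 x p3.2) = 1 := by
    have := hf 2 2
    simp only [Matrix.cons_val_two, Matrix.tail_cons, Matrix.head_cons] at this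
    rw [ExtL_apply] at this
    simp only [conjForm_apply'] at this
    simpa using this
  -- complexified wedge identities
  have hAC := algExt (fun a => θ1 x a) (gamF θ1 θ2 ψ T2 x) hA
  have hBC := algExt (fun a => (starRingEnd ℂ) (θ1 x a)) (gamF θ1 θ2 ψ T2 x) hB
  -- Cartan on pairs
  have antiC : ∀ p q : V5 × V5,
      (gamF θ1 θ2 ψ T2 x p.1 q.1 - gamF θ1 θ2 ψ T2 x p.2 q.2
        + Complex.I * gamF θ1 θ2 ψ T2 x p.1 q.2 + Complex.I * gamF θ1 θ2 ψ T2 x p.2 q.1)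
      = -(gamF θ1 θ2 ψ T2 x q.1 p.1 - gamF θ1 θ2 ψ T2 x q.2 p.2
        + Complex.I * gamF θ1 θ2 ψ T2 x q.1 p.2 + Complex.I * gamF θ1 θ2 ψ T2 x q.2 p.1) := by
    intro p q
    rw [anti p.1 q.1, anti p.2 q.2, anti p.1 q.2, anti p.2 q.1]
    ring
  have hC := algCartan
    (fun p : V5 × V5 => θ1 x p.1 + Complex.I * θ1 x p.2)
    (fun p : V5 × V5 => (starRingEnd ℂ) (θ1 x p.1) + Complex.I * (starRingEnd ℂ) (θ1 x p.2))
    (fun p q : V5 × V5 => gamF θ1 θ2 ψ T2 x p.1 q.1 - gamF θ1 θ2 ψ T2 x p.2 q.2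
        + Complex.I * gamF θ1 θ2 ψ T2 x p.1 q.2 + Complex.I * gamF θ1 θ2 ψ T2 x p.2 q.1)
    p1 p3 antiC h00 h20 h02 h22 hAC hBC
  -- evaluate at real vectors
  have gz1 : ∀ a : V5, gamF θ1 θ2 ψ T2 x a 0 = 0 := by
    intro a
    have h0 : (fun y => ψ y (0 : V5)) = fun _ => (0 : ℝ) := by
      funext y; exact map_zero _
    simp [gamF, extDR, h0]
  have gz2 : ∀ a : V5, gamF θ1 θ2 ψ T2 x 0 a = 0 := by
    intro a
    rw [anti, gz1, neg_zero]
  set c : ℂ := gamF θ1 θ2 ψ T2 x p1.1 p3.1 - gamF θ1 θ2 ψ T2 x p1.2 p3.2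
        + Complex.I * gamF θ1 θ2 ψ T2 x p1.1 p3.2 + Complex.I * gamF θ1 θ2 ψ T2 x p1.2 p3.1
    with hc
  have hmain : ∀ v w : V5, gamF θ1 θ2 ψ T2 x v w =
      c * (θ1 x v * (starRingEnd ℂ) (θ1 x w) - θ1 x w * (starRingEnd ℂ) (θ1 x v)) := by
    intro v w
    have h := hC (v, (0 : V5)) (w, (0 : V5))
    simp only [gz1, gz2, map_zero, ContinuousLinearMap.map_zero] at h
    simpa using h
  -- nondegeneracy
  have hknz : ∃ v w : V5, θ1 x v * (starRingEnd ℂ) (θ1 x w)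
      - θ1 x w * (starRingEnd ℂ) (θ1 x v) ≠ 0 := by
    by_contra hcon
    push_neg at hcon
    have e11 := hcon p1.1 p3.1
    have e22 := hcon p1.2 p3.2
    have e12 := hcon p1.1 p3.2
    have e21 := hcon p1.2 p3.1
    have : (1 : ℂ) = 0 := by
      have expand : (θ1 x p1.1 + Complex.I * θ1 x p1.2)
          * ((starRingEnd ℂ) (θ1 x p3.1) + Complex.I * (starRingEnd ℂ) (θ1 x p3.2))
          - (θ1 x p3.1 + Complex.I * θ1 x p3.2)
          * ((starRingEnd ℂ) (θ1 x p1.1) + Complex.I * (starRingEnd ℂ) (θ1 x p1.2)) = 0 := by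
        linear_combination e11 + Complex.I * e12 + Complex.I * e21 + Complex.I ^ 2 * e22
      rw [h00, h22, h02, h20] at expand
      simpa using expand
    exact one_ne_zero this
  refine ⟨hknz, c, ?_, hmain⟩
  -- purely imaginary
  obtain ⟨v, w, hk⟩ := hknz
  have h1 := hmain v w
  have h2 := congrArg (starRingEnd ℂ) h1
  rw [hreal v w] at h2
  simp only [map_mul, map_sub, Complex.conj_conj] at h2
  have h4 : (c + (starRingEnd ℂ) c) * (θ1 x v * (starRingEnd ℂ) (θ1 x w)
      - θ1 x w * (starRingEnd ℂ) (θ1 x v)) = 0 := by linear_combination h2 - h1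
  rcases mul_eq_zero.1 h4 with h5 | h5
  · have := congrArg Complex.re h5
    simpa [Complex.add_re, Complex.conj_re] using this
  · exact absurd h5 hk
end PW

section Final
variable {θ1 θ2 : V5 → V5 →L[ℝ] ℂ} {ψ : V5 → V5 →L[ℝ] ℝ} {U : Set V5}

lemma smooth_conj {g : V5 → ℂ} (hg : ContDiffOn ℝ (⊤ : ℕ∞) g U) :
    ContDiffOn ℝ (⊤ : ℕ∞) (fun x => (starRingEnd ℂ) (g x)) U :=
  Complex.conjCLE.toContinuousLinearMap.contDiff.comp_contDiffOn hg

lemma smooth_ofReal {g : V5 → ℝ} (hg : ContDiffOn ℝ (⊤ : ℕ∞) g U) :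
    ContDiffOn ℝ (⊤ : ℕ∞) (fun x => ((g x : ℝ) : ℂ)) U :=
  Complex.ofRealCLM.contDiff.comp_contDiffOn hg

end Final


/-- Given the structure equations `dθ¹ = −iψ∧θ¹ + θ̄¹∧θ²` and
`dθ² = −2iψ∧θ² + T₁θ¹∧θ̄¹ + T₂θ¹∧θ²` of a canonical coframing on `U ⊆ ℝ⁵`, there is a
smooth purely imaginary function `T₃` with
`dψ = iθ²∧θ̄² + iT̄₂θ¹∧θ̄² − iT₂θ̄¹∧θ² + T₃θ¹∧θ̄¹`. -/
theorem stmt13 (U : Set (Fin 5 → ℝ)) (hU : IsOpen U)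
    (θ1 θ2 : (Fin 5 → ℝ) → (Fin 5 → ℝ) →L[ℝ] ℂ)
    (ψ : (Fin 5 → ℝ) → (Fin 5 → ℝ) →L[ℝ] ℝ)
    (hθ1 : ContDiffOn ℝ (⊤ : ℕ∞) θ1 U) (hθ2 : ContDiffOn ℝ (⊤ : ℕ∞) θ2 U)
    (hψ : ContDiffOn ℝ (⊤ : ℕ∞) ψ U)
    (hindep : ∀ x ∈ U, LinearIndependent ℂ
      ![θ1 x, θ2 x, conjForm (θ1 x), conjForm (θ2 x), realToC (ψ x)])
    (T1 T2 : (Fin 5 → ℝ) → ℂ)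
    (hT1 : ContDiffOn ℝ (⊤ : ℕ∞) T1 U) (hT2 : ContDiffOn ℝ (⊤ : ℕ∞) T2 U)
    (heq1 : ∀ x ∈ U, ∀ v w, extD θ1 x v w =
      -Complex.I * (((ψ x v : ℝ) : ℂ) * θ1 x w - ((ψ x w : ℝ) : ℂ) * θ1 x v)
      + ((starRingEnd ℂ) (θ1 x v) * θ2 x w - (starRingEnd ℂ) (θ1 x w) * θ2 x v))
    (heq2 : ∀ x ∈ U, ∀ v w, extD θ2 x v w =
      -2 * Complex.I * (((ψ x v : ℝ) : ℂ) * θ2 x w - ((ψ x w : ℝ) : ℂ) * θ2 x v)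
      + T1 x * (θ1 x v * (starRingEnd ℂ) (θ1 x w) - θ1 x w * (starRingEnd ℂ) (θ1 x v))
      + T2 x * (θ1 x v * θ2 x w - θ1 x w * θ2 x v)) :
    ∃ T3 : (Fin 5 → ℝ) → ℂ,
      ContDiffOn ℝ (⊤ : ℕ∞) T3 U ∧ (∀ x ∈ U, (T3 x).re = 0) ∧
      ∀ x ∈ U, ∀ v w, ((extDR ψ x v w : ℝ) : ℂ) =
        Complex.I * (θ2 x v * (starRingEnd ℂ) (θ2 x w) - θ2 x w * (starRingEnd ℂ) (θ2 x v))
        + Complex.I * (starRingEnd ℂ) (T2 x) *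
            (θ1 x v * (starRingEnd ℂ) (θ2 x w) - θ1 x w * (starRingEnd ℂ) (θ2 x v))
        - Complex.I * T2 x *
            ((starRingEnd ℂ) (θ1 x v) * θ2 x w - (starRingEnd ℂ) (θ1 x w) * θ2 x v)
        + T3 x * (θ1 x v * (starRingEnd ℂ) (θ1 x w) - θ1 x w * (starRingEnd ℂ) (θ1 x v)) := by
  classical
  have hex : ∀ x, x ∈ U →
      (∃ v w : V5, θ1 x v * (starRingEnd ℂ) (θ1 x w)
        - θ1 x w * (starRingEnd ℂ) (θ1 x v) ≠ 0) ∧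
      ∃ c : ℂ, c.re = 0 ∧ ∀ v w : V5, gamF θ1 θ2 ψ T2 x v w =
        c * (θ1 x v * (starRingEnd ℂ) (θ1 x w) - θ1 x w * (starRingEnd ℂ) (θ1 x v)) :=
    fun x hx => mainPointwise hU hθ1 hθ2 hψ hindep T1 T2 heq1 heq2 hx
  refine ⟨fun x => if h : x ∈ U then ((hex x h).2).choose else 0, ?_, ?_, ?_⟩
  · -- smoothness
    intro x₀ hx₀
    obtain ⟨v₀, w₀, hk0⟩ := (hex x₀ hx₀).1
    have h1v : ContDiffOn ℝ (⊤ : ℕ∞) (fun x => θ1 x v₀) U := hθ1.clm_apply contDiffOn_const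
    have h1w : ContDiffOn ℝ (⊤ : ℕ∞) (fun x => θ1 x w₀) U := hθ1.clm_apply contDiffOn_const
    have h2v : ContDiffOn ℝ (⊤ : ℕ∞) (fun x => θ2 x v₀) U := hθ2.clm_apply contDiffOn_const
    have h2w : ContDiffOn ℝ (⊤ : ℕ∞) (fun x => θ2 x w₀) U := hθ2.clm_apply contDiffOn_const
    have hdψ : ContDiffOn ℝ (⊤ : ℕ∞) (fun x => fderiv ℝ ψ x) U :=
      hψ.fderiv_of_isOpen hU (by simp)
    have hD0 : ContDiffOn ℝ (⊤ : ℕ∞) (fun x => extDR ψ x v₀ w₀) U := by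
      refine ContDiffOn.congr
        (f := fun x => fderiv ℝ ψ x v₀ w₀ - fderiv ℝ ψ x w₀ v₀) ?_ ?_
      · exact ((hdψ.clm_apply contDiffOn_const).clm_apply contDiffOn_const).sub
          ((hdψ.clm_apply contDiffOn_const).clm_apply contDiffOn_const)
      · intro x hx
        exact extDR_eq hU hψ hx v₀ w₀
    have hkS : ContDiffOn ℝ (⊤ : ℕ∞) (fun x => θ1 x v₀ * (starRingEnd ℂ) (θ1 x w₀)
        - θ1 x w₀ * (starRingEnd ℂ) (θ1 x v₀)) U :=
      (h1v.mul (smooth_conj h1w)).sub (h1w.mul (smooth_conj h1v))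
    have hgam : ContDiffOn ℝ (⊤ : ℕ∞) (fun x => gamF θ1 θ2 ψ T2 x v₀ w₀) U := by
      have A := smooth_ofReal hD0
      have B : ContDiffOn ℝ (⊤ : ℕ∞) (fun x => Complex.I * (θ2 x v₀ * (starRingEnd ℂ) (θ2 x w₀)
          - θ2 x w₀ * (starRingEnd ℂ) (θ2 x v₀))) U :=
        contDiffOn_const.mul ((h2v.mul (smooth_conj h2w)).sub (h2w.mul (smooth_conj h2v)))
      have C : ContDiffOn ℝ (⊤ : ℕ∞) (fun x => Complex.I * (starRingEnd ℂ) (T2 x) *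
          (θ1 x v₀ * (starRingEnd ℂ) (θ2 x w₀) - θ1 x w₀ * (starRingEnd ℂ) (θ2 x v₀))) U :=
        (contDiffOn_const.mul (smooth_conj hT2)).mul
          ((h1v.mul (smooth_conj h2w)).sub (h1w.mul (smooth_conj h2v)))
      have D : ContDiffOn ℝ (⊤ : ℕ∞) (fun x => Complex.I * T2 x *
          ((starRingEnd ℂ) (θ1 x v₀) * θ2 x w₀ - (starRingEnd ℂ) (θ1 x w₀) * θ2 x v₀)) U :=
        (contDiffOn_const.mul hT2).mul
          (((smooth_conj h1v).mul h2w).sub ((smooth_conj h1w).mul h2v))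
      exact ((A.sub B).sub C).add D
    have hq : ContDiffWithinAt ℝ (⊤ : ℕ∞) (fun x => gamF θ1 θ2 ψ T2 x v₀ w₀ *
        (θ1 x v₀ * (starRingEnd ℂ) (θ1 x w₀) - θ1 x w₀ * (starRingEnd ℂ) (θ1 x v₀))⁻¹) U x₀ :=
      (hgam x₀ hx₀).mul ((hkS x₀ hx₀).inv hk0)
    have hN : IsOpen (U ∩ (fun x => θ1 x v₀ * (starRingEnd ℂ) (θ1 x w₀)
        - θ1 x w₀ * (starRingEnd ℂ) (θ1 x v₀)) ⁻¹' {(0 : ℂ)}ᶜ) :=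
      hkS.continuousOn.isOpen_inter_preimage hU isOpen_compl_singleton
    have hmem : x₀ ∈ U ∩ (fun x => θ1 x v₀ * (starRingEnd ℂ) (θ1 x w₀)
        - θ1 x w₀ * (starRingEnd ℂ) (θ1 x v₀)) ⁻¹' {(0 : ℂ)}ᶜ := ⟨hx₀, hk0⟩
    have heqN : ∀ x ∈ U ∩ (fun x => θ1 x v₀ * (starRingEnd ℂ) (θ1 x w₀)
        - θ1 x w₀ * (starRingEnd ℂ) (θ1 x v₀)) ⁻¹' {(0 : ℂ)}ᶜ,
        (if h : x ∈ U then ((hex x h).2).choose else 0) =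
        gamF θ1 θ2 ψ T2 x v₀ w₀ *
          (θ1 x v₀ * (starRingEnd ℂ) (θ1 x w₀) - θ1 x w₀ * (starRingEnd ℂ) (θ1 x v₀))⁻¹ := by
      intro x hxN
      obtain ⟨hxU, hxk⟩ := hxN
      have hxk' : θ1 x v₀ * (starRingEnd ℂ) (θ1 x w₀)
          - θ1 x w₀ * (starRingEnd ℂ) (θ1 x v₀) ≠ 0 := hxk
      rw [dif_pos hxU]
      rw [eq_mul_inv_iff_mul_eq₀ hxk']
      exact (((hex x hxU).2).choose_spec.2 v₀ w₀).symm
    refine ContDiffWithinAt.congr_of_eventuallyEq hq ?_ (heqN x₀ hmem)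
    exact Filter.eventually_of_mem (nhdsWithin_le_nhds (hN.mem_nhds hmem)) heqN
  · intro x hx
    simp only [dif_pos hx]
    exact ((hex x hx).2).choose_spec.1
  · intro x hx v w
    simp only [dif_pos hx]
    have hs := ((hex x hx).2).choose_spec.2 v w
    simp only [gamF] at hs
    rw [← sub_eq_iff_eq_add]
    erw [← hs]
    ring
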